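/- Let a ∈ C³[0,1] and b ∈ C²[0,1] be real-valued, let λ_n (n ≥ 1) be the eigenvalues of the damped wave eigenvalue problem in the upper half-plane enumeration, set c_0 = −⟨a⟩, c_1 = ⟨a² + b⟩/(2πi), and S = Σ_{n≥1}(Re λ_n − c_0). Then for real λ → +∞, Σ_{n=1}^∞ (π²n² − |λ_n|² + 2λ Re λ_n)/(π²n² + λ²) = c_0 + (2S − c_0 − c_0²/2 + iπ c_1) λ^{−1} + O(λ^{−2}). -/

import Mathlib

open Real
set_option maxHeartbeats 1000000

section helpers



lemma arctan_le_self' (x : ℝ) (hx : 0 ≤ x) : Real.arctan x ≤ x := by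
  have h : Monotone (fun t : ℝ => t - Real.arctan t) := by
    apply monotone_of_deriv_nonneg
    · exact differentiable_id.sub Real.differentiable_arctan
    · intro t
      have : HasDerivAt (fun t : ℝ => t - Real.arctan t) (1 - 1/(1+t^2)) t :=
        (hasDerivAt_id t).sub (Real.hasDerivAt_arctan t)
      rw [this.deriv]
      have h1 : (1:ℝ) ≤ 1 + t^2 := by nlinarith [sq_nonneg t]
      have : 1/(1+t^2) ≤ 1 := by
        rw [div_le_one (by linarith)]; linarith
      linarith
  have := h hx
  simpa using this

lemma self_sub_cube_le_arctan (x : ℝ) (hx : 0 ≤ x) : x - x^3/3 ≤ Real.arctan x := by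
  have h : Monotone (fun t : ℝ => Real.arctan t - t + t^3/3) := by
    apply monotone_of_deriv_nonneg
    · exact (Real.differentiable_arctan.sub differentiable_id).add (differentiable_id.pow 3 |>.div_const 3)
    · intro t
      have hd : HasDerivAt (fun t : ℝ => Real.arctan t - t + t^3/3)
          (1/(1+t^2) - 1 + (3 * t^2 * 1)/3) t := by
        exact ((Real.hasDerivAt_arctan t).sub (hasDerivAt_id t)).add
          (((hasDerivAt_id t).pow 3).div_const 3)
      rw [hd.deriv]
      have h1 : (0:ℝ) < 1 + t^2 := by nlinarith [sq_nonneg t]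
      have he : 1/(1+t^2) - 1 + (3*t^2*1)/3 = t^4/(1+t^2) := by
        field_simp; ring
      rw [he]
      positivity
  have := h hx
  simp only [Real.arctan_zero] at this
  linarith [this]

lemma gcont (l : ℝ) (hl : 0 < l) : Continuous (fun t : ℝ => 1/(Real.pi^2*t^2+l^2)) := by
  apply Continuous.div continuous_const (by continuity)
  intro t
  positivity

lemma hasDerivF (l : ℝ) (hl : 0 < l) (t : ℝ) :
    HasDerivAt (fun t : ℝ => Real.arctan (Real.pi*t/l) / (Real.pi*l))
      (1/(Real.pi^2*t^2+l^2)) t := by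
  have hπ := Real.pi_pos
  have inner : HasDerivAt (fun t : ℝ => Real.pi*t/l) (Real.pi/l) t := by
    simpa using ((hasDerivAt_id t).const_mul Real.pi).div_const l
  have h1 : HasDerivAt (fun t : ℝ => Real.arctan (Real.pi*t/l))
      ((1/(1+(Real.pi*t/l)^2)) * (Real.pi/l)) t :=
    (Real.hasDerivAt_arctan _).comp t inner
  have h2 := h1.div_const (Real.pi*l)
  refine h2.congr_deriv ?_
  field_simp
  ring

lemma intg (l : ℝ) (hl : 0 < l) (x y : ℝ) :
    (∫ t in x..y, 1/(Real.pi^2*t^2+l^2))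
      = (Real.arctan (Real.pi*y/l) - Real.arctan (Real.pi*x/l))/(Real.pi*l) := by
  rw [intervalIntegral.integral_eq_sub_of_hasDerivAt
    (fun t _ => hasDerivF l hl t) ((gcont l hl).intervalIntegrable x y)]
  ring

lemma gpos (l : ℝ) (hl : 0 < l) (t : ℝ) : 0 < 1/(Real.pi^2*t^2+l^2) := by positivity

lemma gsummable (l : ℝ) (hl : 0 < l) :
    Summable (fun n : ℕ => 1/(Real.pi^2*((n:ℝ)+1)^2+l^2)) := by
  have h2 : Summable (fun n : ℕ => 1/((n:ℝ)+1)^2) := by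
    have := (summable_nat_add_iff 1).2 (Real.summable_one_div_nat_pow.2 one_lt_two)
    simpa using this
  apply Summable.of_nonneg_of_le (fun n => le_of_lt (gpos l hl _)) _ h2
  intro n
  have hπ : (1:ℝ) ≤ Real.pi^2 := by nlinarith [Real.pi_gt_three]
  apply div_le_div_of_nonneg_left one_pos.le (by positivity)
  nlinarith [sq_nonneg ((n:ℝ)+1), sq_nonneg l]

lemma gterm_le_integral (l : ℝ) (hl : 0 < l) (n : ℕ) :
    1/(Real.pi^2*((n:ℝ)+1)^2+l^2) ≤ ∫ t in (n:ℝ)..((n:ℝ)+1), 1/(Real.pi^2*t^2+l^2) := by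
  have h : (1:ℝ)/(Real.pi^2*((n:ℝ)+1)^2+l^2)
      = ∫ t in (n:ℝ)..((n:ℝ)+1), 1/(Real.pi^2*((n:ℝ)+1)^2+l^2) := by
    simp
  rw [h]
  apply intervalIntegral.integral_mono_on (by linarith)
    (intervalIntegrable_const) ((gcont l hl).intervalIntegrable _ _)
  intro t ht
  obtain ⟨ht1, ht2⟩ := ht
  have hπ := Real.pi_pos
  apply div_le_div_of_nonneg_left one_pos.le (by positivity)
  have ht0 : 0 ≤ t := le_trans (Nat.cast_nonneg n) ht1
  have hsq : t^2 ≤ ((n:ℝ)+1)^2 := by nlinarith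
  nlinarith [mul_le_mul_of_nonneg_left hsq (sq_nonneg Real.pi)]

lemma sum_range_integrals (l : ℝ) (hl : 0 < l) (N : ℕ) :
    (∑ n ∈ Finset.range N, ∫ t in (n:ℝ)..((n:ℝ)+1), 1/(Real.pi^2*t^2+l^2))
      = ∫ t in (0:ℝ)..(N:ℝ), 1/(Real.pi^2*t^2+l^2) := by
  have := intervalIntegral.sum_integral_adjacent_intervals (μ := MeasureTheory.volume) (a := fun n : ℕ => (n:ℝ))
    (f := fun t => 1/(Real.pi^2*t^2+l^2)) (n := N)
    (fun k _ => (gcont l hl).intervalIntegrable _ _)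
  simpa using this

lemma tsum_g_le (l : ℝ) (hl : 1 ≤ l) :
    ∑' n : ℕ, 1/(Real.pi^2*((n:ℝ)+1)^2+l^2) ≤ 1/(2*l) := by
  have hl0 : 0 < l := by linarith
  have hπ := Real.pi_pos
  apply tsum_le_of_sum_range_le (fun n => (gpos l hl0 _).le)
  intro N
  calc (∑ n ∈ Finset.range N, 1/(Real.pi^2*((n:ℝ)+1)^2+l^2))
      ≤ ∑ n ∈ Finset.range N, ∫ t in (n:ℝ)..((n:ℝ)+1), 1/(Real.pi^2*t^2+l^2) :=
        Finset.sum_le_sum (fun n _ => gterm_le_integral l hl0 n)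
    _ = ∫ t in (0:ℝ)..(N:ℝ), 1/(Real.pi^2*t^2+l^2) := sum_range_integrals l hl0 N
    _ = (Real.arctan (Real.pi*N/l) - Real.arctan (Real.pi*0/l))/(Real.pi*l) := intg l hl0 0 N
    _ ≤ (Real.pi/2)/(Real.pi*l) := by
        apply div_le_div_of_nonneg_right _ (by positivity)
        simp [Real.arctan_zero]
        exact (Real.arctan_lt_pi_div_two _).le
    _ = 1/(2*l) := by field_simp

lemma gsq_summable (l : ℝ) (hl : 0 < l) :
    Summable (fun n : ℕ => 1/(Real.pi^2*((n:ℝ)+1)^2+l^2)^2) := by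
  apply Summable.of_nonneg_of_le (fun n => by positivity) _ (gsummable l hl)
  intro n
  have hπ := Real.pi_pos
  apply div_le_div_of_nonneg_left one_pos.le (by positivity)
  have h9 : (9:ℝ) < Real.pi^2 := by nlinarith [Real.pi_gt_three]
  have hn1 : (1:ℝ) ≤ ((n:ℝ)+1)^2 := by nlinarith [(Nat.cast_nonneg n : (0:ℝ) ≤ (n:ℝ))]
  have hA : (1:ℝ) ≤ Real.pi^2*((n:ℝ)+1)^2+l^2 := by nlinarith [sq_nonneg l]
  nlinarith [hA]

lemma tsum_gsq_le (l : ℝ) (hl : 1 ≤ l) :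
    ∑' n : ℕ, 1/(Real.pi^2*((n:ℝ)+1)^2+l^2)^2 ≤ 1/(2*l^3) := by
  have hl0 : 0 < l := by linarith
  have h1 : ∀ n : ℕ, 1/(Real.pi^2*((n:ℝ)+1)^2+l^2)^2
      ≤ (1/l^2) * (1/(Real.pi^2*((n:ℝ)+1)^2+l^2)) := by
    intro n
    have hπ := Real.pi_pos
    rw [div_mul_div_comm, one_mul]
    apply div_le_div_of_nonneg_left one_pos.le (by positivity)
    nlinarith [sq_nonneg ((n:ℝ)+1), sq_nonneg l, sq_nonneg (Real.pi*((n:ℝ)+1))]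
  calc (∑' n : ℕ, 1/(Real.pi^2*((n:ℝ)+1)^2+l^2)^2)
      ≤ ∑' n : ℕ, (1/l^2) * (1/(Real.pi^2*((n:ℝ)+1)^2+l^2)) :=
        Summable.tsum_le_tsum h1 (gsq_summable l hl0) ((gsummable l hl0).mul_left _)
    _ = (1/l^2) * ∑' n : ℕ, 1/(Real.pi^2*((n:ℝ)+1)^2+l^2) := tsum_mul_left
    _ ≤ (1/l^2) * (1/(2*l)) := by
        apply mul_le_mul_of_nonneg_left (tsum_g_le l hl) (by positivity)
    _ = 1/(2*l^3) := by field_simp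



lemma hfun_bound (l m s : ℝ) (hl : 1 ≤ l) (hm : 1 ≤ m) (hs0 : 0 ≤ s) (hs : s ≤ 1/2) :
    |1/(Real.pi^2*(m+s)^2+l^2) + 1/(Real.pi^2*(m-s)^2+l^2) - 2*(1/(Real.pi^2*m^2+l^2))|
      ≤ 8*Real.pi^2/(Real.pi^2*m^2+l^2)^2 := by
  have hπ := Real.pi_pos
  have h9 : (9:ℝ) < Real.pi^2 := by nlinarith [Real.pi_gt_three]
  obtain ⟨A, hA⟩ : ∃ A : ℝ, A = Real.pi^2*m^2+l^2 := ⟨_, rfl⟩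
  obtain ⟨B, hB⟩ : ∃ B : ℝ, B = Real.pi^2*(m+s)^2+l^2 := ⟨_, rfl⟩
  obtain ⟨C, hC⟩ : ∃ C : ℝ, C = Real.pi^2*(m-s)^2+l^2 := ⟨_, rfl⟩
  rw [← hA, ← hB, ← hC]
  have hA0 : 0 < A := by rw [hA]; positivity
  have hB0 : 0 < B := by rw [hB]; positivity
  have hC0 : 0 < C := by rw [hC]; positivity
  have key : 1/B + 1/C - 2*(1/A)
      = (2*Real.pi^2*s^2*(3*Real.pi^2*m^2 - l^2 - Real.pi^2*s^2))/(A*B*C) := by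
    rw [hA, hB, hC]
    field_simp
    ring
  have hAπ : Real.pi^2 ≤ A := by
    rw [hA]
    nlinarith [sq_nonneg l, mul_nonneg (sq_nonneg Real.pi) (by nlinarith : (0:ℝ) ≤ m^2 - 1)]
  have hBA : A ≤ B := by
    rw [hA, hB]
    nlinarith [mul_nonneg (mul_nonneg (sq_nonneg Real.pi) hs0) (by linarith : (0:ℝ) ≤ m),
      mul_nonneg (sq_nonneg Real.pi) (sq_nonneg s)]
  have hCA : A/4 ≤ C := by
    rw [hA, hC]
    nlinarith [mul_nonneg (sq_nonneg Real.pi) (sq_nonneg (m - 2*s)), sq_nonneg l]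
  have hs2 : s^2 ≤ 1/4 := by nlinarith
  have hsm : s^2 ≤ m^2 := by nlinarith
  have hπsm : Real.pi^2*s^2 ≤ Real.pi^2*m^2 :=
    mul_le_mul_of_nonneg_left hsm (sq_nonneg Real.pi)
  have hπs : (0:ℝ) ≤ Real.pi^2*s^2 := by positivity
  have hπm : (0:ℝ) ≤ Real.pi^2*m^2 := by positivity
  rw [key, abs_div]
  have hnum : |2*Real.pi^2*s^2*(3*Real.pi^2*m^2 - l^2 - Real.pi^2*s^2)| ≤ 2*Real.pi^2*A := by
    rw [abs_mul]
    have h1 : |2*Real.pi^2*s^2| = 2*Real.pi^2*s^2 := abs_of_nonneg (by positivity)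
    rw [h1]
    clear key
    have h2 : |3*Real.pi^2*m^2 - l^2 - Real.pi^2*s^2| ≤ 4*A := by
      rw [abs_le, hA]
      constructor
      · nlinarith [sq_nonneg l]
      · nlinarith [sq_nonneg l]
    have h3 : 2*Real.pi^2*s^2 ≤ 2*Real.pi^2*(1/4) := by nlinarith
    calc 2*Real.pi^2*s^2 * |3*Real.pi^2*m^2 - l^2 - Real.pi^2*s^2|
        ≤ 2*Real.pi^2*(1/4) * (4*A) := mul_le_mul h3 h2 (abs_nonneg _) (by positivity)
      _ = 2*Real.pi^2*A := by ring
  have habs : |A*B*C| = A*B*C := abs_of_pos (by positivity)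
  have hden : A*A*(A/4) ≤ A*B*C := by
    have e1 : A*A*(A/4) ≤ A*B*(A/4) :=
      mul_le_mul_of_nonneg_right (mul_le_mul_of_nonneg_left hBA hA0.le) (by positivity)
    have e2 : (A*B)*(A/4) ≤ (A*B)*C :=
      mul_le_mul_of_nonneg_left hCA (mul_pos hA0 hB0).le
    linarith
  rw [habs]
  calc |2*Real.pi^2*s^2*(3*Real.pi^2*m^2 - l^2 - Real.pi^2*s^2)|/(A*B*C)
      ≤ (2*Real.pi^2*A)/(A*A*(A/4)) := div_le_div₀ (by positivity) hnum (by positivity) hden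
    _ = 8*Real.pi^2/A^2 := by field_simp; ring


lemma mid_int (l m : ℝ) (hl : 1 ≤ l) (hm : 1 ≤ m) :
    |(∫ t in (m-1/2)..(m+1/2), 1/(Real.pi^2*t^2+l^2)) - 1/(Real.pi^2*m^2+l^2)|
      ≤ 4*Real.pi^2/(Real.pi^2*m^2+l^2)^2 := by
  have hl0 : 0 < l := by linarith
  set g : ℝ → ℝ := fun t => 1/(Real.pi^2*t^2+l^2) with hg
  have hgc : Continuous g := gcont l hl0
  have e1 : (∫ s in (0:ℝ)..(1/2), g (m+s)) = ∫ t in m..(m+1/2), g t := by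
    have h := intervalIntegral.integral_comp_add_left (a := (0:ℝ)) (b := 1/2) (f := g) m
    simpa using h
  have e2 : (∫ s in (0:ℝ)..(1/2), g (m-s)) = ∫ t in (m-1/2)..m, g t := by
    have h := intervalIntegral.integral_comp_sub_left (a := (0:ℝ)) (b := 1/2) (f := g) m
    simpa using h
  have e3 : (∫ s in (0:ℝ)..(1/2), (2*(1/(Real.pi^2*m^2+l^2)) : ℝ)) = 1/(Real.pi^2*m^2+l^2) := by
    simp
  have hsplit : (∫ t in (m-1/2)..(m+1/2), g t)
      = (∫ t in (m-1/2)..m, g t) + ∫ t in m..(m+1/2), g t :=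
    (intervalIntegral.integral_add_adjacent_intervals
      (hgc.intervalIntegrable _ _) (hgc.intervalIntegrable _ _)).symm
  have hcomb : (∫ t in (m-1/2)..(m+1/2), g t) - 1/(Real.pi^2*m^2+l^2)
      = ∫ s in (0:ℝ)..(1/2), (g (m+s) + g (m-s) - 2*(1/(Real.pi^2*m^2+l^2))) := by
    rw [intervalIntegral.integral_sub, intervalIntegral.integral_add]
    · rw [e1, e2, e3, hsplit]; ring
    · exact (hgc.comp (by continuity)).intervalIntegrable _ _
    · exact (hgc.comp (by continuity)).intervalIntegrable _ _
    · exact ((hgc.comp (by continuity)).add (hgc.comp (by continuity))).intervalIntegrable _ _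
    · exact intervalIntegrable_const
  rw [hcomb]
  have hb := intervalIntegral.norm_integral_le_of_norm_le_const
    (a := (0:ℝ)) (b := 1/2) (C := 8*Real.pi^2/(Real.pi^2*m^2+l^2)^2)
    (f := fun s => g (m+s) + g (m-s) - 2*(1/(Real.pi^2*m^2+l^2))) ?_
  · rw [Real.norm_eq_abs] at hb
    calc |∫ s in (0:ℝ)..(1/2), (g (m+s) + g (m-s) - 2*(1/(Real.pi^2*m^2+l^2)))|
        ≤ 8*Real.pi^2/(Real.pi^2*m^2+l^2)^2 * |1/2 - (0:ℝ)| := hb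
      _ = 4*Real.pi^2/(Real.pi^2*m^2+l^2)^2 := by
          rw [show |1/2 - (0:ℝ)| = 1/2 by norm_num]; ring
  · intro s hs
    rw [Set.uIoc_of_le (by norm_num : (0:ℝ) ≤ 1/2)] at hs
    rw [Real.norm_eq_abs]
    exact hfun_bound l m s hl hm hs.1.le hs.2



lemma hasSum_intervals (l : ℝ) (hl : 1 ≤ l) :
    HasSum (fun n : ℕ => ∫ t in (((n:ℝ)+1)-1/2)..(((n:ℝ)+1)+1/2), 1/(Real.pi^2*t^2+l^2))
      ((Real.pi/2 - Real.arctan (Real.pi*(1/2)/l))/(Real.pi*l)) := by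
  have hl0 : 0 < l := by linarith
  have hπ := Real.pi_pos
  set f : ℕ → ℝ := fun k => Real.arctan (Real.pi*((k:ℝ)+1/2)/l)/(Real.pi*l) with hf
  have hterm : ∀ n : ℕ, (∫ t in (((n:ℝ)+1)-1/2)..(((n:ℝ)+1)+1/2), 1/(Real.pi^2*t^2+l^2))
      = f (n+1) - f n := by
    intro n
    rw [intg l hl0]
    rw [hf]
    push_cast
    rw [div_sub_div_same]
    norm_num
    ring_nf
  have hpsum : ∀ N : ℕ, (∑ n ∈ Finset.range N,
      ∫ t in (((n:ℝ)+1)-1/2)..(((n:ℝ)+1)+1/2), 1/(Real.pi^2*t^2+l^2)) = f N - f 0 := by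
    intro N
    rw [Finset.sum_congr rfl (fun n _ => hterm n)]
    exact Finset.sum_range_sub f N
  have hlim : Filter.Tendsto f Filter.atTop (nhds ((Real.pi/2)/(Real.pi*l))) := by
    apply Filter.Tendsto.div_const
    apply Filter.Tendsto.comp (tendsto_nhds_of_tendsto_nhdsWithin Real.tendsto_arctan_atTop)
    apply Filter.Tendsto.atTop_div_const hl0
    apply Filter.Tendsto.const_mul_atTop hπ
    exact Filter.tendsto_atTop_add_const_right _ _ tendsto_natCast_atTop_atTop
  have hnonneg : ∀ n : ℕ, 0 ≤ ∫ t in (((n:ℝ)+1)-1/2)..(((n:ℝ)+1)+1/2), 1/(Real.pi^2*t^2+l^2) := by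
    intro n
    apply intervalIntegral.integral_nonneg (by linarith)
    intro x _; exact (gpos l hl0 x).le
  have hsummable : Summable (fun n : ℕ =>
      ∫ t in (((n:ℝ)+1)-1/2)..(((n:ℝ)+1)+1/2), 1/(Real.pi^2*t^2+l^2)) := by
    apply summable_of_sum_range_le hnonneg (c := (Real.pi/2)/(Real.pi*l))
    intro N
    rw [hpsum]
    have h1 : f N ≤ (Real.pi/2)/(Real.pi*l) := by
      apply div_le_div_of_nonneg_right _ (by positivity)
      exact (Real.arctan_lt_pi_div_two _).le
    have h2 : 0 ≤ f 0 := by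
      rw [hf]
      apply div_nonneg _ (by positivity)
      have : Real.arctan 0 ≤ Real.arctan (Real.pi*((0:ℕ)+1/2)/l) :=
        Real.arctan_strictMono.monotone (by positivity)
      simpa [Real.arctan_zero] using this
    linarith
  have htend := hsummable.hasSum.tendsto_sum_nat
  have htend2 : Filter.Tendsto (fun N : ℕ => ∑ n ∈ Finset.range N,
      ∫ t in (((n:ℝ)+1)-1/2)..(((n:ℝ)+1)+1/2), 1/(Real.pi^2*t^2+l^2)) Filter.atTop
      (nhds ((Real.pi/2)/(Real.pi*l) - f 0)) := by
    simp only [hpsum]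
    exact hlim.sub_const (f 0)
  have heq : (∑' n : ℕ, ∫ t in (((n:ℝ)+1)-1/2)..(((n:ℝ)+1)+1/2), 1/(Real.pi^2*t^2+l^2))
      = (Real.pi/2)/(Real.pi*l) - f 0 := tendsto_nhds_unique htend htend2
  have hval : (Real.pi/2)/(Real.pi*l) - f 0 = (Real.pi/2 - Real.arctan (Real.pi*(1/2)/l))/(Real.pi*l) := by
    rw [hf]
    push_cast
    rw [div_sub_div_same]
    norm_num
  rw [← hval, ← heq]
  exact hsummable.hasSum



lemma pisq_lt : Real.pi^2 < 10 := by nlinarith [Real.pi_lt_d2, Real.pi_pos]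

lemma W_est (l : ℝ) (hl : 1 ≤ l) :
    |(∑' n : ℕ, 1/(Real.pi^2*((n:ℝ)+1)^2+l^2)) - (1/(2*l) - 1/(2*l^2))| ≤ 21/l^3 := by
  have hl0 : 0 < l := by linarith
  have hπ := Real.pi_pos
  set I : ℕ → ℝ := fun n => ∫ t in (((n:ℝ)+1)-1/2)..(((n:ℝ)+1)+1/2), 1/(Real.pi^2*t^2+l^2)
    with hI
  set V : ℝ := (Real.pi/2 - Real.arctan (Real.pi*(1/2)/l))/(Real.pi*l) with hV
  have hIsum : HasSum I V := hasSum_intervals l hl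
  have hg := gsummable l hl0
  have hdiff : ∀ n : ℕ, |1/(Real.pi^2*((n:ℝ)+1)^2+l^2) - I n|
      ≤ 4*Real.pi^2/(Real.pi^2*((n:ℝ)+1)^2+l^2)^2 := by
    intro n
    have := mid_int l ((n:ℝ)+1) hl (by norm_num [Nat.cast_nonneg] : (1:ℝ) ≤ (n:ℝ)+1)
    rw [abs_sub_comm]
    exact this
  have hsub : Summable (fun n : ℕ => 1/(Real.pi^2*((n:ℝ)+1)^2+l^2) - I n) :=
    hg.sub hIsum.summable
  have hbsummable : Summable (fun n : ℕ => 4*Real.pi^2/(Real.pi^2*((n:ℝ)+1)^2+l^2)^2) := by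
    have h := (gsq_summable l hl0).mul_left (4*Real.pi^2)
    simp only [mul_one_div] at h
    exact h
  have h1 : |(∑' n : ℕ, (1/(Real.pi^2*((n:ℝ)+1)^2+l^2) - I n))| ≤ 2*Real.pi^2/l^3 := by
    calc |(∑' n : ℕ, (1/(Real.pi^2*((n:ℝ)+1)^2+l^2) - I n))|
        ≤ ∑' n : ℕ, |1/(Real.pi^2*((n:ℝ)+1)^2+l^2) - I n| := by
          have hsn : Summable (fun n : ℕ => ‖1/(Real.pi^2*((n:ℝ)+1)^2+l^2) - I n‖) := by
            simp only [Real.norm_eq_abs]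
            exact hbsummable.of_nonneg_of_le (fun n => abs_nonneg _) hdiff
          have hn := norm_tsum_le_tsum_norm
            (f := fun n : ℕ => 1/(Real.pi^2*((n:ℝ)+1)^2+l^2) - I n) hsn
          simpa only [Real.norm_eq_abs] using hn
      _ ≤ ∑' n : ℕ, 4*Real.pi^2/(Real.pi^2*((n:ℝ)+1)^2+l^2)^2 := by
          apply Summable.tsum_le_tsum hdiff _ hbsummable
          exact hbsummable.of_nonneg_of_le (fun n => abs_nonneg _) hdiff
      _ = 4*Real.pi^2 * ∑' n : ℕ, 1/(Real.pi^2*((n:ℝ)+1)^2+l^2)^2 := by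
          rw [← tsum_mul_left]
          congr 1; ext n; ring
      _ ≤ 4*Real.pi^2 * (1/(2*l^3)) := by
          exact mul_le_mul_of_nonneg_left (tsum_gsq_le l hl) (by positivity)
      _ = 2*Real.pi^2/l^3 := by field_simp; ring
  have htsub : (∑' n : ℕ, (1/(Real.pi^2*((n:ℝ)+1)^2+l^2) - I n))
      = (∑' n : ℕ, 1/(Real.pi^2*((n:ℝ)+1)^2+l^2)) - V := by
    rw [Summable.tsum_sub hg hIsum.summable, hIsum.tsum_eq]
  have hVmain : |V - (1/(2*l) - 1/(2*l^2))| ≤ 1/l^3 := by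
    have hx0 : (0:ℝ) ≤ Real.pi*(1/2)/l := by positivity
    have ha1 := arctan_le_self' _ hx0
    have ha2 := self_sub_cube_le_arctan _ hx0
    have hVeq : V - (1/(2*l) - 1/(2*l^2))
        = (Real.pi*(1/2)/l - Real.arctan (Real.pi*(1/2)/l))/(Real.pi*l) := by
      rw [hV]; field_simp; ring
    rw [hVeq, abs_div, abs_of_pos (by positivity : (0:ℝ) < Real.pi*l)]
    rw [abs_of_nonneg (by linarith)]
    rw [div_le_div_iff₀ (by positivity) (by positivity)]
    have hcube : (Real.pi*(1/2)/l)^3 = Real.pi^3/(8*l^3) := by field_simp; ring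
    have hkey : Real.pi*(1/2)/l - Real.arctan (Real.pi*(1/2)/l) ≤ Real.pi^3/(24*l^3) := by
      have := ha2
      rw [hcube] at this
      have he : Real.pi^3/(8*l^3)/3 = Real.pi^3/(24*l^3) := by ring
      linarith [this, he.le, he.ge]
    calc (Real.pi*(1/2)/l - Real.arctan (Real.pi*(1/2)/l)) * l^3
        ≤ Real.pi^3/(24*l^3) * l^3 := by
          apply mul_le_mul_of_nonneg_right hkey (by positivity)
      _ = Real.pi^3/24 := by field_simp
      _ ≤ 1*(Real.pi*l) := by nlinarith [pisq_lt, hπ, Real.pi_lt_d2]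
  calc |(∑' n : ℕ, 1/(Real.pi^2*((n:ℝ)+1)^2+l^2)) - (1/(2*l) - 1/(2*l^2))|
      ≤ |(∑' n : ℕ, 1/(Real.pi^2*((n:ℝ)+1)^2+l^2)) - V| + |V - (1/(2*l) - 1/(2*l^2))| :=
        abs_sub_le _ _ _
    _ ≤ 2*Real.pi^2/l^3 + 1/l^3 := by
        rw [← htsub]
        exact add_le_add h1 hVmain
    _ ≤ 21/l^3 := by
        rw [← add_div, div_le_div_iff₀ (by positivity) (by positivity)]
        nlinarith [pisq_lt, pow_pos hl0 3]

lemma abs_comb4 (A B C D : ℝ) : |A + B - C - D| ≤ |A| + |B| + |C| + |D| := by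
  apply abs_le.mpr
  constructor <;>
    [ (nlinarith [le_abs_self A, le_abs_self B, le_abs_self C, le_abs_self D,
        neg_abs_le A, neg_abs_le B, neg_abs_le C, neg_abs_le D]);
      (nlinarith [le_abs_self A, le_abs_self B, le_abs_self C, le_abs_self D,
        neg_abs_le A, neg_abs_le B, neg_abs_le C, neg_abs_le D])]


end helpers



/-- `⟨f⟩ = ∫₀¹ f(x) dx` for a function on `[0,1]`. -/
noncomputable def intAvg (f : ℝ → ℝ) : ℝ := ∫ x in (0:ℝ)..1, f x

/-- `λ` is an eigenvalue of the damped wave eigenvalue problem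
`u'' − (λ² + 2λa − b)u = 0` on `(0,1)`, `u(0) = u(1) = 0`. -/
def IsDampedEigenvalue (a b : ℝ → ℝ) (l : ℂ) : Prop :=
  ∃ u : ℝ → ℂ,
    ContDiffOn ℝ 2 u (Set.Icc 0 1) ∧
    (∃ x ∈ Set.Icc (0:ℝ) 1, u x ≠ 0) ∧
    (∀ x ∈ Set.Ioo (0:ℝ) 1,
      deriv (deriv u) x = (l ^ 2 + 2 * l * (a x : ℂ) - (b x : ℂ)) * u x) ∧
    u 0 = 0 ∧ u 1 = 0

/-- for `a ∈ C³[0,1]`, `b ∈ C²[0,1]`, let `Λ n` (`n ≥ 1`) be the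
eigenvalues in the upper half-plane enumeration, `c₀ = −⟨a⟩`, `r = ⟨a² + b⟩`
(so `iπc₁ = r/2` and `−2πic₁ = −r`), and `S = Σ_{n≥1}(Re Λ n − c₀)`. Then for real
`λ → +∞`,
`Σ_{n≥1} (π²n² − |Λ n|² + 2λ Re Λ n)/(π²n² + λ²) = c₀ + (2S − c₀ − c₀²/2 + r/2)λ^{−1} + O(λ^{−2})`. -/
theorem first_power_series_asymptotics (a b : ℝ → ℝ)
    (ha : ContDiffOn ℝ 3 a (Set.Icc 0 1))
    (hb : ContDiffOn ℝ 2 b (Set.Icc 0 1))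
    (Λ : ℕ → ℂ)
    (hev : ∀ n : ℕ, 1 ≤ n → IsDampedEigenvalue a b (Λ n))
    (hup : ∀ n : ℕ, 1 ≤ n → 0 ≤ (Λ n).im)
    (hmono : ∀ n k : ℕ, 1 ≤ n → n ≤ k → (Λ n).im ≤ (Λ k).im)
    (c0 r : ℝ) (hc0 : c0 = -intAvg a) (hr : r = intAvg (fun x => (a x) ^ 2 + b x))
    (habs : ∃ K : ℝ, ∀ n : ℕ, 1 ≤ n →
      |‖Λ n‖ ^ 2 - (Real.pi ^ 2 * (n : ℝ) ^ 2 - r + c0 ^ 2)| ≤ K / (n : ℝ) ^ 2)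
    (hre : ∃ K : ℝ, ∀ n : ℕ, 1 ≤ n → |(Λ n).re - c0| ≤ K / (n : ℝ) ^ 2)
    (S : ℝ) (hS : HasSum (fun n : ℕ => (Λ (n + 1)).re - c0) S) :
    ∃ C R : ℝ, 0 < R ∧ ∀ l : ℝ, R ≤ l →
      Summable (fun n : ℕ =>
        (Real.pi ^ 2 * ((n : ℝ) + 1) ^ 2 - ‖Λ (n + 1)‖ ^ 2
          + 2 * l * (Λ (n + 1)).re) / (Real.pi ^ 2 * ((n : ℝ) + 1) ^ 2 + l ^ 2)) ∧
      |(∑' n : ℕ,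
          (Real.pi ^ 2 * ((n : ℝ) + 1) ^ 2 - ‖Λ (n + 1)‖ ^ 2
            + 2 * l * (Λ (n + 1)).re) / (Real.pi ^ 2 * ((n : ℝ) + 1) ^ 2 + l ^ 2))
        - (c0 + (2 * S - c0 - c0 ^ 2 / 2 + r / 2) / l)| ≤ C / l ^ 2 := by
  obtain ⟨K1, hK1⟩ := habs
  obtain ⟨K2, hK2⟩ := hre
  -- the perturbations
  set ee : ℕ → ℝ := fun n =>
    ‖Λ (n+1)‖ ^ 2 - (Real.pi ^ 2 * ((n:ℝ)+1) ^ 2 - r + c0 ^ 2) with hee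
  set dd : ℕ → ℝ := fun n => (Λ (n+1)).re - c0 with hdd
  have heb : ∀ n : ℕ, |ee n| ≤ K1/((n:ℝ)+1)^2 := by
    intro n
    have := hK1 (n+1) (Nat.le_add_left 1 n)
    rw [hee]
    push_cast at this ⊢
    exact this
  have hdb : ∀ n : ℕ, |dd n| ≤ K2/((n:ℝ)+1)^2 := by
    intro n
    have := hK2 (n+1) (Nat.le_add_left 1 n)
    rw [hdd]
    push_cast at this ⊢
    exact this
  have hK1nn : 0 ≤ K1 := by have := (abs_nonneg _).trans (heb 0); nlinarith
  have hK2nn : 0 ≤ K2 := by have := (abs_nonneg _).trans (hdb 0); nlinarith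
  have hB2sum : Summable (fun n : ℕ => 1/((n:ℝ)+1)^2) := by
    have := (summable_nat_add_iff 1).2 (Real.summable_one_div_nat_pow.2 one_lt_two)
    simpa using this
  set B2 : ℝ := ∑' n : ℕ, 1/((n:ℝ)+1)^2 with hB2
  have hB2nn : 0 ≤ B2 := tsum_nonneg (fun n => by positivity)
  refine ⟨21*|r - c0^2| + 42*|c0| + 10*K2 + K1*B2 + |r - c0^2|/2, 1, one_pos, ?_⟩
  intro l hl
  have hl0 : 0 < l := by linarith
  have hπ := Real.pi_pos
  set D : ℕ → ℝ := fun n => Real.pi ^ 2 * ((n:ℝ)+1) ^ 2 + l ^ 2 with hD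
  have hD0 : ∀ n, 0 < D n := fun n => by rw [hD]; positivity
  have hgsum : Summable (fun n : ℕ => 1/(D n)) := by
    rw [hD]; exact gsummable l hl0
  have hgle : ∀ n, 1/(D n) ≤ 1/l^2 := by
    intro n
    apply div_le_div_of_nonneg_left one_pos.le (by positivity)
    show l^2 ≤ Real.pi ^ 2 * ((n:ℝ)+1) ^ 2 + l ^ 2
    nlinarith [mul_nonneg (sq_nonneg Real.pi) (sq_nonneg ((n:ℝ)+1))]
  -- term decomposition
  have hterm : ∀ n : ℕ,
      (Real.pi ^ 2 * ((n : ℝ) + 1) ^ 2 - ‖Λ (n + 1)‖ ^ 2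
        + 2 * l * (Λ (n + 1)).re) / (Real.pi ^ 2 * ((n : ℝ) + 1) ^ 2 + l ^ 2)
      = (r - c0^2 + 2*l*c0) * (1/(D n)) + 2*l*(dd n * (1/(D n))) - ee n * (1/(D n)) := by
    intro n
    have hDn : D n ≠ 0 := (hD0 n).ne'
    have hnum : Real.pi ^ 2 * ((n : ℝ) + 1) ^ 2 - ‖Λ (n + 1)‖ ^ 2
        + 2 * l * (Λ (n + 1)).re
        = (r - c0^2 + 2*l*c0) + 2*l*(dd n) - ee n := by
      rw [hdd, hee]; ring
    have hDn' : Real.pi ^ 2 * ((n:ℝ)+1) ^ 2 + l ^ 2 = D n := rfl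
    rw [hnum, hDn']
    field_simp
  -- summability of pieces
  have hdgsum : Summable (fun n : ℕ => dd n * (1/(D n))) := by
    apply Summable.of_abs
    apply Summable.of_nonneg_of_le (fun n => abs_nonneg _) _ (hgsum.mul_left K2)
    intro n
    rw [abs_mul, abs_of_pos (by positivity : (0:ℝ) < 1/(D n))]
    apply mul_le_mul_of_nonneg_right _ (by positivity)
    calc |dd n| ≤ K2/((n:ℝ)+1)^2 := hdb n
      _ ≤ K2 := div_le_self hK2nn (by nlinarith [Nat.cast_nonneg (α := ℝ) n])
  have hegabs : ∀ n : ℕ, |ee n * (1/(D n))| ≤ (K1/l^2) * (1/((n:ℝ)+1)^2) := by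
    intro n
    rw [abs_mul, abs_of_pos (by positivity : (0:ℝ) < 1/(D n))]
    calc |ee n| * (1/(D n)) ≤ (K1/((n:ℝ)+1)^2) * (1/l^2) :=
          mul_le_mul (heb n) (hgle n) (by positivity) (by positivity)
      _ = (K1/l^2) * (1/((n:ℝ)+1)^2) := by ring
  have hegsum : Summable (fun n : ℕ => ee n * (1/(D n))) := by
    apply Summable.of_abs
    exact (hB2sum.mul_left (K1/l^2)).of_nonneg_of_le (fun n => abs_nonneg _) hegabs
  have hsummable : Summable (fun n : ℕ =>
      (Real.pi ^ 2 * ((n : ℝ) + 1) ^ 2 - ‖Λ (n + 1)‖ ^ 2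
        + 2 * l * (Λ (n + 1)).re) / (Real.pi ^ 2 * ((n : ℝ) + 1) ^ 2 + l ^ 2)) := by
    apply Summable.congr _ (fun n => (hterm n).symm)
    exact ((hgsum.mul_left (r - c0^2 + 2*l*c0)).add (hdgsum.mul_left (2*l))).sub hegsum
  refine ⟨hsummable, ?_⟩
  set W : ℝ := ∑' n : ℕ, 1/(D n) with hW
  set Sd : ℝ := ∑' n : ℕ, dd n * (1/(D n)) with hSd
  set Se : ℝ := ∑' n : ℕ, ee n * (1/(D n)) with hSe
  have hT : (∑' n : ℕ,
      (Real.pi ^ 2 * ((n : ℝ) + 1) ^ 2 - ‖Λ (n + 1)‖ ^ 2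
        + 2 * l * (Λ (n + 1)).re) / (Real.pi ^ 2 * ((n : ℝ) + 1) ^ 2 + l ^ 2))
      = (r - c0^2 + 2*l*c0) * W + 2*l*Sd - Se := by
    rw [tsum_congr hterm,
      Summable.tsum_sub ((hgsum.mul_left (r - c0^2 + 2*l*c0)).add (hdgsum.mul_left (2*l))) hegsum,
      Summable.tsum_add (hgsum.mul_left (r - c0^2 + 2*l*c0)) (hdgsum.mul_left (2*l)),
      tsum_mul_left, tsum_mul_left]
  -- W estimate
  have hWest : |W - (1/(2*l) - 1/(2*l^2))| ≤ 21/l^3 := W_est l hl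
  have hWle : W ≤ 1/(2*l) := tsum_g_le l hl
  have hWnn : 0 ≤ W := tsum_nonneg (fun n => by positivity)
  -- Se estimate
  have hSeb : |Se| ≤ K1*B2/l^2 := by
    have h1 : |Se| ≤ ∑' n : ℕ, |ee n * (1/(D n))| := by
      have hsn : Summable (fun n : ℕ => ‖ee n * (1/(D n))‖) := by
        simp only [Real.norm_eq_abs]
        exact (hB2sum.mul_left (K1/l^2)).of_nonneg_of_le (fun n => abs_nonneg _) hegabs
      simpa only [Real.norm_eq_abs] using
        norm_tsum_le_tsum_norm (f := fun n : ℕ => ee n * (1/(D n))) hsn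
    calc |Se| ≤ ∑' n : ℕ, |ee n * (1/(D n))| := h1
      _ ≤ ∑' n : ℕ, (K1/l^2) * (1/((n:ℝ)+1)^2) := by
          apply Summable.tsum_le_tsum hegabs _ (hB2sum.mul_left (K1/l^2))
          exact (hB2sum.mul_left (K1/l^2)).of_nonneg_of_le (fun n => abs_nonneg _) hegabs
      _ = (K1/l^2) * B2 := by rw [tsum_mul_left]
      _ = K1*B2/l^2 := by ring
  -- Sd estimate
  have hdkey : ∀ n : ℕ, 2*l*(dd n*(1/(D n))) - (2/l)*dd n
      = -(dd n * ((2*Real.pi^2*((n:ℝ)+1)^2)/(l*(D n)))) := by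
    intro n
    have hDe : D n = Real.pi ^ 2 * ((n:ℝ)+1) ^ 2 + l ^ 2 := rfl
    rw [hDe]
    field_simp
    ring
  have hdabs : ∀ n : ℕ, |2*l*(dd n*(1/(D n))) - (2/l)*dd n|
      ≤ (2*Real.pi^2*K2/l) * (1/(D n)) := by
    intro n
    rw [hdkey n, abs_neg, abs_mul,
      abs_of_pos (by positivity : (0:ℝ) < (2*Real.pi^2*((n:ℝ)+1)^2)/(l*(D n)))]
    have hn1 : (0:ℝ) < ((n:ℝ)+1)^2 := by positivity
    calc |dd n| * ((2*Real.pi^2*((n:ℝ)+1)^2)/(l*(D n)))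
        ≤ (K2/((n:ℝ)+1)^2) * ((2*Real.pi^2*((n:ℝ)+1)^2)/(l*(D n))) :=
          mul_le_mul_of_nonneg_right (hdb n) (by positivity)
      _ = (2*Real.pi^2*K2/l) * (1/(D n)) := by
          field_simp
  have hEdsum : Summable (fun n : ℕ => 2*l*(dd n*(1/(D n))) - (2/l)*dd n) :=
    (hdgsum.mul_left (2*l)).sub (hS.summable.mul_left (2/l))
  have hEdval : (∑' n : ℕ, (2*l*(dd n*(1/(D n))) - (2/l)*dd n)) = 2*l*Sd - (2/l)*S := by
    rw [Summable.tsum_sub (hdgsum.mul_left (2*l)) (hS.summable.mul_left (2/l)),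
      tsum_mul_left, tsum_mul_left, hS.tsum_eq]
  have hEdb : |2*l*Sd - (2/l)*S| ≤ 10*K2/l^2 := by
    rw [← hEdval]
    have h1 : |(∑' n : ℕ, (2*l*(dd n*(1/(D n))) - (2/l)*dd n))|
        ≤ ∑' n : ℕ, |2*l*(dd n*(1/(D n))) - (2/l)*dd n| := by
      have hsn : Summable (fun n : ℕ => ‖2*l*(dd n*(1/(D n))) - (2/l)*dd n‖) := by
        simp only [Real.norm_eq_abs]
        exact (hgsum.mul_left (2*Real.pi^2*K2/l)).of_nonneg_of_le (fun n => abs_nonneg _) hdabs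
      simpa only [Real.norm_eq_abs] using
        norm_tsum_le_tsum_norm (f := fun n : ℕ => 2*l*(dd n*(1/(D n))) - (2/l)*dd n) hsn
    calc |(∑' n : ℕ, (2*l*(dd n*(1/(D n))) - (2/l)*dd n))|
        ≤ ∑' n : ℕ, |2*l*(dd n*(1/(D n))) - (2/l)*dd n| := h1
      _ ≤ ∑' n : ℕ, (2*Real.pi^2*K2/l) * (1/(D n)) := by
          apply Summable.tsum_le_tsum hdabs _ (hgsum.mul_left _)
          exact (hgsum.mul_left (2*Real.pi^2*K2/l)).of_nonneg_of_le (fun n => abs_nonneg _) hdabs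
      _ = (2*Real.pi^2*K2/l) * W := by rw [tsum_mul_left]
      _ ≤ (2*Real.pi^2*K2/l) * (1/(2*l)) := mul_le_mul_of_nonneg_left hWle (by positivity)
      _ ≤ 10*K2/l^2 := by
          rw [div_mul_div_comm, div_le_div_iff₀ (by positivity) (by positivity)]
          nlinarith [pisq_lt, sq_nonneg l, mul_pos hl0 hl0,
            mul_nonneg (mul_nonneg hK2nn (sq_nonneg l)) hl0.le]
  -- final assembly
  have hfinal : (r - c0^2 + 2*l*c0) * W + 2*l*Sd - Se - (c0 + (2*S - c0 - c0^2/2 + r/2)/l)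
      = (r - c0^2 + 2*l*c0) * (W - (1/(2*l) - 1/(2*l^2)))
        + (2*l*Sd - (2/l)*S) - Se - (r - c0^2)/(2*l^2) := by
    field_simp
    ring
  rw [hT, hfinal]
  have habs4 := abs_comb4 ((r - c0^2 + 2*l*c0) * (W - (1/(2*l) - 1/(2*l^2))))
    (2*l*Sd - (2/l)*S) Se ((r - c0^2)/(2*l^2))
  have hA : |(r - c0^2 + 2*l*c0) * (W - (1/(2*l) - 1/(2*l^2)))|
      ≤ (|r - c0^2| + 2*l*|c0|) * (21/l^3) := by
    rw [abs_mul]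
    apply mul_le_mul _ hWest (abs_nonneg _) (by positivity)
    calc |r - c0^2 + 2*l*c0| ≤ |r - c0^2| + |2*l*c0| := abs_add_le _ _
      _ = |r - c0^2| + 2*l*|c0| := by
          rw [abs_mul, abs_of_pos (by positivity : (0:ℝ) < 2*l)]
  have hAle : (|r - c0^2| + 2*l*|c0|) * (21/l^3) ≤ 21*|r - c0^2|/l^2 + 42*|c0|/l^2 := by
    have he : (|r - c0^2| + 2*l*|c0|) * (21/l^3) = 21*|r - c0^2|/l^3 + 42*|c0|/l^2 := by
      field_simp
      ring
    rw [he]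
    have h2 : 21*|r - c0^2|/l^3 ≤ 21*|r - c0^2|/l^2 := by
      apply div_le_div_of_nonneg_left (by positivity) (by positivity)
      nlinarith [sq_nonneg l]
    linarith
  have hD4 : |(r - c0^2)/(2*l^2)| = (|r - c0^2|/2)/l^2 := by
    rw [abs_div, abs_of_pos (by positivity : (0:ℝ) < 2*l^2)]
    ring
  calc |(r - c0^2 + 2*l*c0) * (W - (1/(2*l) - 1/(2*l^2)))
        + (2*l*Sd - (2/l)*S) - Se - (r - c0^2)/(2*l^2)|
      ≤ |(r - c0^2 + 2*l*c0) * (W - (1/(2*l) - 1/(2*l^2)))|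
        + |2*l*Sd - (2/l)*S| + |Se| + |(r - c0^2)/(2*l^2)| := habs4
    _ ≤ ((|r - c0^2| + 2*l*|c0|) * (21/l^3)) + (10*K2/l^2) + (K1*B2/l^2)
        + ((|r - c0^2|/2)/l^2) := by
        rw [hD4]
        exact add_le_add (add_le_add (add_le_add hA hEdb) hSeb) le_rfl
    _ ≤ (21*|r - c0^2|/l^2 + 42*|c0|/l^2) + (10*K2/l^2) + (K1*B2/l^2)
        + ((|r - c0^2|/2)/l^2) := by linarith [hAle]
    _ = (21*|r - c0^2| + 42*|c0| + 10*K2 + K1*B2 + |r - c0^2|/2)/l^2 := by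
        field_simp
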